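/- arXiv:0903.5512 — 3 statements merged into one kernel-verified Lean document; each statement's English description precedes it below -/
import Mathlib

section
/- Let a ≤ b ≤ c be positive integers such that c = k·a + l·b for some nonnegative integers k, l. Then the map F : C^3 → C^3 defined as the composition (x, y, z + x^k y^l) ∘ (x + z^a, y + z^b, z), i.e. F(x,y,z) = (x + z^a, y + z^b, z + (x+z^a)^k (y+z^b)^l), is a polynomial automorphism of C^3 whose coordinates have total degrees a, b, c respectively. -/
open MvPolynomial Finset

/-- A polynomial map `ℂ^n → ℂ^n`, given by its coordinate polynomials. -/
abbrev PolyMap (n : ℕ) := Fin n → MvPolynomial (Fin n) ℂ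

/-- Composition of polynomial maps: `(compPM F G) = F ∘ G`. -/
noncomputable def compPM {n : ℕ} (F G : PolyMap n) : PolyMap n :=
  fun i => aeval G (F i)

/-- The identity polynomial map. -/
noncomputable def idPM (n : ℕ) : PolyMap n := fun i => X i

/-- `F` is a polynomial automorphism: it has a polynomial inverse. -/
def IsPolyAut {n : ℕ} (F : PolyMap n) : Prop :=
  ∃ G : PolyMap n, compPM F G = idPM n ∧ compPM G F = idPM n

/-- `F` is elementary: it changes one coordinate `j` by adding a polynomial
not involving the variable `j`. -/
def IsElementaryPM {n : ℕ} (F : PolyMap n) : Prop :=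
  ∃ (j : Fin n) (g : MvPolynomial (Fin n) ℂ),
    degreeOf j g = 0 ∧ F j = X j + g ∧ ∀ i, i ≠ j → F i = X i

/-- `F` is a linear (degree ≤ 1) automorphism. -/
def IsLinearPM {n : ℕ} (F : PolyMap n) : Prop :=
  IsPolyAut F ∧ ∀ i, (F i).totalDegree ≤ 1

/-- `F` is tame: a composition of linear and elementary automorphisms. -/
inductive IsTamePM : {n : ℕ} → PolyMap n → Prop
  | lin {n} (F : PolyMap n) : IsLinearPM F → IsTamePM F
  | elem {n} (F : PolyMap n) : IsElementaryPM F → IsTamePM F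
  | comp {n} (F G : PolyMap n) : IsTamePM F → IsTamePM G → IsTamePM (compPM F G)

/-- The multidegree of a polynomial map of `ℂ^3`. -/
noncomputable def mdeg3 (F : PolyMap 3) : ℕ × ℕ × ℕ :=
  ((F 0).totalDegree, (F 1).totalDegree, (F 2).totalDegree)


lemma coeff_aeval_single (p : MvPolynomial (Fin 3) ℂ) (m : ℕ) :
    Polynomial.coeff (aeval ![0, 0, (Polynomial.X : Polynomial ℂ)] p) m
      = coeff (Finsupp.single 2 m) p := by
  induction p using MvPolynomial.induction_on' with
  | add p q hp hq => simp [map_add, coeff_add, hp, hq]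
  | monomial d r =>
      rw [aeval_monomial, Finsupp.prod_pow, Fin.prod_univ_three]
      simp only [Matrix.cons_val_zero, Matrix.cons_val_one, Matrix.head_cons,
        Matrix.cons_val_two, Matrix.tail_cons]
      rw [coeff_monomial]
      by_cases h0 : d 0 = 0
      · by_cases h1 : d 1 = 0
        · rw [h0, h1]
          simp only [pow_zero, one_mul]
          rw [Algebra.algebraMap_eq_smul_one, smul_mul_assoc, one_mul, Polynomial.coeff_smul,
            Polynomial.coeff_X_pow]
          by_cases h2 : d 2 = m
          · rw [if_pos h2.symm, if_pos, smul_eq_mul, mul_one]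
            ext i; fin_cases i <;> simp [h0, h1, h2, Finsupp.single_apply]
          · rw [if_neg (fun h => h2 h.symm), if_neg, smul_zero]
            intro h; subst h; simp at h2
        · rw [zero_pow h1, if_neg]
          · simp
          · intro h; subst h; simp at h1
      · rw [zero_pow h0, if_neg]
        · simp
        · intro h; subst h; simp at h0

lemma deg_aux (i : Fin 3) (hi : i ≠ 2) (n : ℕ) (hn : 0 < n) :
    (X i + X 2 ^ n : MvPolynomial (Fin 3) ℂ).totalDegree = n := by
  apply le_antisymm
  · refine (totalDegree_add _ _).trans (max_le ?_ ?_)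
    · rw [totalDegree_X]; exact hn
    · rw [totalDegree_X_pow]
  · have hmem : Finsupp.single 2 n ∈ (X i + X 2 ^ n : MvPolynomial (Fin 3) ℂ).support := by
      rw [mem_support_iff, coeff_add, coeff_X', coeff_X_pow, if_pos rfl, if_neg]
      · norm_num
      · intro h
        have := DFunLike.congr_fun h 2
        simp [Finsupp.single_apply, hi] at this
        omega
    have := le_totalDegree hmem
    rwa [Finsupp.sum_single_index rfl] at this

theorem stmt1 (a b c k l : ℕ) (ha : 0 < a) (hab : a ≤ b) (hbc : b ≤ c)
    (hc : c = k * a + l * b) :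
    ∀ F : PolyMap 3,
      F = compPM ![X 0, X 1, X 2 + X 0 ^ k * X 1 ^ l]
                 ![X 0 + X 2 ^ a, X 1 + X 2 ^ b, X 2] →
      IsPolyAut F ∧
      F = ![X 0 + X 2 ^ a, X 1 + X 2 ^ b,
            X 2 + (X 0 + X 2 ^ a) ^ k * (X 1 + X 2 ^ b) ^ l] ∧
      mdeg3 F = (a, b, c) := by
  intro F hF
  have hFeq : F = ![X 0 + X 2 ^ a, X 1 + X 2 ^ b,
      X 2 + (X 0 + X 2 ^ a) ^ k * (X 1 + X 2 ^ b) ^ l] := by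
    subst hF
    funext i
    fin_cases i <;> simp [compPM, map_add, map_mul, map_pow, aeval_X]
  refine ⟨?_, hFeq, ?_⟩
  · refine ⟨![X 0 - (X 2 - X 0 ^ k * X 1 ^ l) ^ a, X 1 - (X 2 - X 0 ^ k * X 1 ^ l) ^ b,
      X 2 - X 0 ^ k * X 1 ^ l], ?_, ?_⟩ <;>
    · rw [hFeq]
      funext i
      fin_cases i <;> simp [compPM, idPM, map_add, map_mul, map_sub, map_pow, aeval_X]
  · have hb : 0 < b := lt_of_lt_of_le ha hab
    have hc1 : 0 < c := lt_of_lt_of_le hb hbc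
    have hdeg2 : (X 2 + (X 0 + X 2 ^ a) ^ k * (X 1 + X 2 ^ b) ^ l
        : MvPolynomial (Fin 3) ℂ).totalDegree = c := by
      apply le_antisymm
      · refine (totalDegree_add _ _).trans (max_le ?_ ?_)
        · rw [totalDegree_X]; exact hc1
        · refine (totalDegree_mul _ _).trans ?_
          rw [hc]
          gcongr
          · exact (totalDegree_pow _ _).trans (by rw [deg_aux 0 (by decide) a ha])
          · exact (totalDegree_pow _ _).trans (by rw [deg_aux 1 (by decide) b hb])
      · have hmem : Finsupp.single 2 c ∈
            (X 2 + (X 0 + X 2 ^ a) ^ k * (X 1 + X 2 ^ b) ^ l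
              : MvPolynomial (Fin 3) ℂ).support := by
          rw [mem_support_iff, ← coeff_aeval_single]
          have heq : aeval ![0, 0, (Polynomial.X : Polynomial ℂ)]
              (X 2 + (X 0 + X 2 ^ a) ^ k * (X 1 + X 2 ^ b) ^ l : MvPolynomial (Fin 3) ℂ)
              = Polynomial.X + Polynomial.X ^ c := by
            simp only [map_add, map_mul, map_pow, aeval_X, Matrix.cons_val_zero,
              Matrix.cons_val_one, Matrix.head_cons, Matrix.cons_val_two, Matrix.tail_cons,
              zero_add]
            rw [← pow_mul, ← pow_mul, ← pow_add, hc]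
            ring_nf
          rw [heq, Polynomial.coeff_add, Polynomial.coeff_X, Polynomial.coeff_X_pow,
            if_pos rfl]
          split_ifs <;> norm_num
        have := le_totalDegree hmem
        rwa [Finsupp.sum_single_index rfl] at this
    rw [hFeq]
    simp only [mdeg3, Matrix.cons_val_zero, Matrix.cons_val_one, Matrix.head_cons,
      Matrix.cons_val_two, Matrix.tail_cons]
    rw [deg_aux 0 (by decide) a ha, deg_aux 1 (by decide) b hb, hdeg2]
end

section
/- Let a, b be coprime integers with b > a > 2. Then for every integer c ≥ (a−1)(b−1) there exists a tame polynomial automorphism of C^3 with multidegree (a, b, c). -/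
open MvPolynomial Finset

/-! ### Auxiliary lemmas -/

lemma compPM_assoc {n : ℕ} (F G H : PolyMap n) :
    compPM (compPM F G) H = compPM F (compPM G H) := by
  funext i
  show (aeval H) ((aeval G) (F i)) = aeval (fun j => aeval H (G j)) (F i)
  rw [← MvPolynomial.comp_aeval]
  rfl

lemma compPM_id_left {n : ℕ} (F : PolyMap n) : compPM (idPM n) F = F := by
  funext i; simp [compPM, idPM]

lemma compPM_id_right {n : ℕ} (F : PolyMap n) : compPM F (idPM n) = F := by
  funext i
  show aeval (idPM n) (F i) = F i
  rw [show idPM n = (X : Fin n → MvPolynomial (Fin n) ℂ) from rfl]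
  exact aeval_X_left_apply _

/-- If `g` does not involve variable `j` and `H` fixes every other variable,
then `aeval H g = g`. -/
lemma aeval_fixed {n : ℕ} {j : Fin n} {g : MvPolynomial (Fin n) ℂ}
    (hg : degreeOf j g = 0) (H : PolyMap n) (hH : ∀ i, i ≠ j → H i = X i) :
    aeval H g = g := by
  have h2 : aeval H g = aeval X g := by
    rw [aeval_def, aeval_def, ← coe_eval₂Hom, ← coe_eval₂Hom]
    apply eval₂Hom_congr' rfl _ rfl
    intro i hi _
    apply hH
    rintro rfl
    rw [mem_vars] at hi
    obtain ⟨d, hd, hid⟩ := hi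
    have h3 := monomial_le_degreeOf i hd
    rw [hg, Nat.le_zero] at h3
    exact (Finsupp.mem_support_iff.mp hid) h3
  rw [h2, aeval_X_left_apply]

lemma IsTamePM.isPolyAut : ∀ {n : ℕ} {F : PolyMap n}, IsTamePM F → IsPolyAut F := by
  intro n F h
  induction h with
  | lin F h => exact h.1
  | elem F h =>
    obtain ⟨j, g, hg, hj, hi⟩ := h
    set G : PolyMap n := fun i => if i = j then X j - g else X i with hGdef
    have hGfix : ∀ k, k ≠ j → G k = X k := fun k hk => if_neg hk
    have hfixG : aeval G g = g := aeval_fixed hg G hGfix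
    have hfixF : aeval F g = g := aeval_fixed hg F hi
    refine ⟨G, ?_, ?_⟩
    · funext i
      show aeval G (F i) = idPM n i
      by_cases hij : i = j
      · rw [hij, hj, map_add, aeval_X, hfixG, idPM]
        have : G j = X j - g := if_pos rfl
        rw [this]; ring
      · rw [hi i hij, aeval_X, hGfix i hij, idPM]
    · funext i
      show aeval F (G i) = idPM n i
      by_cases hij : i = j
      · rw [hij]
        have : G j = X j - g := if_pos rfl
        rw [this, map_sub, aeval_X, hj, hfixF, idPM]; ring
      · rw [hGfix i hij, aeval_X, hi i hij, idPM]
  | comp F G hF hG ihF ihG =>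
    obtain ⟨F', hF1, hF2⟩ := ihF
    obtain ⟨G', hG1, hG2⟩ := ihG
    refine ⟨compPM G' F', ?_, ?_⟩
    · rw [compPM_assoc, ← compPM_assoc G, hG1, compPM_id_left, hF1]
    · rw [compPM_assoc, ← compPM_assoc F', hF2, compPM_id_left, hG2]

/-- Key degree lower bound: substituting polynomials of degree ≤ 1 cannot
increase the total degree. -/
lemma natDegree_aeval_le {n : ℕ} (t : Fin n → Polynomial ℂ)
    (ht : ∀ i, (t i).natDegree ≤ 1) (p : MvPolynomial (Fin n) ℂ) :
    (aeval t p).natDegree ≤ p.totalDegree := by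
  conv_lhs => rw [p.as_sum]
  rw [map_sum]
  apply Polynomial.natDegree_sum_le_of_forall_le
  intro v hv
  rw [aeval_monomial]
  refine le_trans Polynomial.natDegree_mul_le ?_
  have hC : (algebraMap ℂ (Polynomial ℂ) (coeff v p)).natDegree = 0 := by
    rw [Polynomial.algebraMap_eq]; exact Polynomial.natDegree_C _
  rw [hC, zero_add, Finsupp.prod]
  refine le_trans (Polynomial.natDegree_prod_le _ _) ?_
  refine le_trans (Finset.sum_le_sum fun i _ => (Polynomial.natDegree_pow_le).trans
    (le_trans (Nat.mul_le_mul_left _ (ht i)) (le_of_eq (mul_one _)))) ?_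
  simpa [Finsupp.sum] using le_totalDegree hv

/-- Elementary map changing coordinate `j` by `g`. -/
noncomputable def elemPM {n : ℕ} (j : Fin n) (g : MvPolynomial (Fin n) ℂ) : PolyMap n :=
  fun i => if i = j then X j + g else X i

lemma elemPM_isElementary {n : ℕ} (j : Fin n) (g : MvPolynomial (Fin n) ℂ)
    (hg : degreeOf j g = 0) : IsElementaryPM (elemPM j g) :=
  ⟨j, g, hg, if_pos rfl, fun _ hi => if_neg hi⟩

lemma degreeOf_monomial_zero {n : ℕ} (j : Fin n) (m : Fin n →₀ ℕ) (hm : m j = 0) :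
    degreeOf j (monomial m (1 : ℂ)) = 0 := by
  rw [degreeOf_eq_sup]
  refine Nat.le_zero.mp (Finset.sup_le ?_)
  intro d hd
  rw [support_monomial, if_neg one_ne_zero, Finset.mem_singleton] at hd
  subst hd; simp [hm]

theorem stmt5 (a b : ℕ) (ha : 2 < a) (hab : a < b) (hco : Nat.Coprime a b)
    (c : ℕ) (hc : (a - 1) * (b - 1) ≤ c) :
    ∃ F : PolyMap 3, IsTamePM F ∧ IsPolyAut F ∧ mdeg3 F = (a, b, c) := by
  -- get the representation c = p*a + q*b
  have hfrob := frobeniusNumber_pair hco (by omega) (by omega)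
  have hprod : (a - 1) * (b - 1) + a + b = a * b + 1 := by
    obtain ⟨a', rfl⟩ : ∃ a', a = a' + 1 := ⟨a - 1, by omega⟩
    obtain ⟨b', rfl⟩ : ∃ b', b = b' + 1 := ⟨b - 1, by omega⟩
    have : (a' + 1) * (b' + 1) = a' * b' + a' + b' + 1 := by ring
    simp only [Nat.add_sub_cancel]
    omega
  have hc6 : 2 * 3 ≤ c := le_trans (Nat.mul_le_mul (by omega) (by omega)) hc
  have hcmem : c ∈ AddSubmonoid.closure ({a, b} : Set ℕ) := by
    by_contra hmem
    have := hfrob.2 hmem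
    omega
  rw [AddSubmonoid.mem_closure_pair] at hcmem
  obtain ⟨p, q, hpq⟩ := hcmem
  simp only [smul_eq_mul] at hpq
  -- the three elementary maps
  set T1 : PolyMap 3 := elemPM 0 (X 2 ^ a) with hT1
  set T2 : PolyMap 3 := elemPM 1 (X 2 ^ b) with hT2
  set T3 : PolyMap 3 := elemPM 2 (X 0 ^ p * X 1 ^ q) with hT3
  have hE1 : IsElementaryPM T1 := elemPM_isElementary _ _ (by
    rw [X_pow_eq_monomial]
    exact degreeOf_monomial_zero _ _ (by simp))
  have hE2 : IsElementaryPM T2 := elemPM_isElementary _ _ (by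
    rw [X_pow_eq_monomial]
    exact degreeOf_monomial_zero _ _ (by simp))
  have hE3 : IsElementaryPM T3 := elemPM_isElementary _ _ (by
    rw [X_pow_eq_monomial, X_pow_eq_monomial, monomial_mul, mul_one]
    exact degreeOf_monomial_zero _ _ (by simp))
  refine ⟨compPM T3 (compPM T2 T1), ?_, ?_, ?_⟩
  · exact IsTamePM.comp _ _ (IsTamePM.elem _ hE3)
      (IsTamePM.comp _ _ (IsTamePM.elem _ hE2) (IsTamePM.elem _ hE1))
  · exact IsTamePM.isPolyAut (IsTamePM.comp _ _ (IsTamePM.elem _ hE3)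
      (IsTamePM.comp _ _ (IsTamePM.elem _ hE2) (IsTamePM.elem _ hE1)))
  · -- compute the coordinates
    set F : PolyMap 3 := compPM T3 (compPM T2 T1) with hF
    have hF0 : F 0 = X 0 + X 2 ^ a := by
      simp [hF, compPM, hT1, hT2, hT3, elemPM]
    have hF1 : F 1 = X 1 + X 2 ^ b := by
      simp [hF, compPM, hT1, hT2, hT3, elemPM]
    have hF2 : F 2 = X 2 + (X 0 + X 2 ^ a) ^ p * (X 1 + X 2 ^ b) ^ q := by
      simp [hF, compPM, hT1, hT2, hT3, elemPM]
    -- the substitution x ↦ 0, y ↦ 0, z ↦ X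
    set t : Fin 3 → Polynomial ℂ := fun i => if i = 2 then Polynomial.X else 0 with htdef
    have ht : ∀ i, (t i).natDegree ≤ 1 := by
      intro i
      by_cases h : i = (2 : Fin 3) <;> simp [htdef, h]
    have hta : aeval t (X 2 ^ a : MvPolynomial (Fin 3) ℂ) = Polynomial.X ^ a := by
      simp [htdef]
    have htb : aeval t (X 2 ^ b : MvPolynomial (Fin 3) ℂ) = Polynomial.X ^ b := by
      simp [htdef]
    have deg0 : (F 0).totalDegree = a := by
      apply le_antisymm
      · rw [hF0]
        refine (totalDegree_add _ _).trans ?_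
        simp [totalDegree_X, totalDegree_X_pow]
        omega
      · have := natDegree_aeval_le t ht (F 0)
        rw [hF0] at this ⊢
        rw [map_add, hta] at this
        simpa [htdef] using this
    have deg1 : (F 1).totalDegree = b := by
      apply le_antisymm
      · rw [hF1]
        refine (totalDegree_add _ _).trans ?_
        simp [totalDegree_X, totalDegree_X_pow]
        omega
      · have := natDegree_aeval_le t ht (F 1)
        rw [hF1] at this ⊢
        rw [map_add, htb] at this
        simpa [htdef] using this
    have deg2 : (F 2).totalDegree = c := by
      apply le_antisymm
      · rw [hF2]
        refine (totalDegree_add _ _).trans ?_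
        have h1 : ((X 0 + X 2 ^ a : MvPolynomial (Fin 3) ℂ) ^ p
            * (X 1 + X 2 ^ b) ^ q).totalDegree ≤ p * a + q * b := by
          refine (totalDegree_mul _ _).trans ?_
          refine add_le_add ((totalDegree_pow _ _).trans ?_)
            ((totalDegree_pow _ _).trans ?_)
          · refine Nat.mul_le_mul_left _ ?_
            refine (totalDegree_add _ _).trans ?_
            simp [totalDegree_X, totalDegree_X_pow]; omega
          · refine Nat.mul_le_mul_left _ ?_
            refine (totalDegree_add _ _).trans ?_
            simp [totalDegree_X, totalDegree_X_pow]; omega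
        rw [totalDegree_X]
        have e1 : p * a = a * p := mul_comm _ _
        have e2 : q * b = b * q := mul_comm _ _
        omega
      · have hmain := natDegree_aeval_le t ht (F 2)
        rw [hF2] at hmain
        have heval : aeval t (X 2 + (X 0 + X 2 ^ a) ^ p * (X 1 + X 2 ^ b) ^ q
            : MvPolynomial (Fin 3) ℂ) = Polynomial.X + Polynomial.X ^ c := by
          rw [map_add, map_mul, map_pow, map_pow, map_add, map_add, hta, htb]
          have h0 : aeval t (X 0 : MvPolynomial (Fin 3) ℂ) = 0 := by simp [htdef]
          have h1 : aeval t (X 1 : MvPolynomial (Fin 3) ℂ) = 0 := by simp [htdef]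
          have h2 : aeval t (X 2 : MvPolynomial (Fin 3) ℂ) = Polynomial.X := by
            simp [htdef]
          rw [h0, h1, h2, zero_add, zero_add, ← pow_mul, ← pow_mul, ← pow_add]
          rw [show a * p + b * q = c by rw [mul_comm a p, mul_comm b q]; exact hpq]
        rw [heval] at hmain
        have hdeg : (Polynomial.X + Polynomial.X ^ c : Polynomial ℂ).natDegree = c := by
          rw [Polynomial.natDegree_add_eq_right_of_natDegree_lt]
          · exact Polynomial.natDegree_X_pow c
          · rw [Polynomial.natDegree_X, Polynomial.natDegree_X_pow]
            omega
        rw [hF2]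
        omega
    rw [mdeg3, deg0, deg1, deg2]
end

section
/- Let a, b be positive integers with b > a > 2, e = lcm(a,b), and 0 < m < a. In the polynomial v(x,y,z) = Σ_{i=1}^{e/a} C(e/a, i)(x + z^m)^i z^{e−ia} − Σ_{j=1}^{e/b} C(e/b, j) y^j z^{e−jb} over C[x,y,z], the total degree of v equals e − a + m, with highest-degree monomial (e/a)·z^m·z^{e−a} (after the degree-e terms z^e cancel). -/
open MvPolynomial Finset

lemma expand_pow (m i : ℕ) : ∃ q : MvPolynomial (Fin 3) ℂ,
    (X 0 + X 2 ^ m) ^ i = X 2 ^ (m * i) + X 0 * q := by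
  induction i with
  | zero => exact ⟨0, by simp⟩
  | succ n ih =>
    obtain ⟨q, hq⟩ := ih
    refine ⟨q * (X 0 + X 2 ^ m) + X 2 ^ (m * n), ?_⟩
    rw [pow_succ, hq, Nat.mul_succ, pow_add]
    ring

lemma coeff_zpow_X0_mul (N : ℕ) (p : MvPolynomial (Fin 3) ℂ) :
    coeff (Finsupp.single 2 N) (X 0 * p) = 0 := by
  rw [coeff_X_mul']
  simp [Finsupp.single_apply]

lemma coeff_zpow_term (m N k t : ℕ) (c : ℂ) :
    coeff (Finsupp.single 2 N) ((C c * (X 0 + X 2 ^ m) ^ k * X 2 ^ t : MvPolynomial (Fin 3) ℂ)) =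
      if m * k + t = N then c else 0 := by
  obtain ⟨q, hq⟩ := expand_pow m k
  have : C c * (X 0 + X 2 ^ m) ^ k * X 2 ^ t =
      C c * X 2 ^ (m * k + t) + X 0 * (q * C c * X 2 ^ t) := by
    rw [hq, pow_add]; ring
  rw [this, coeff_add, coeff_zpow_X0_mul, add_zero, X_pow_eq_monomial, C_mul_monomial,
    coeff_monomial, mul_one]
  by_cases h : m * k + t = N
  · simp [h]
  · rw [if_neg h, if_neg]
    intro hs
    exact h (by simpa using DFunLike.congr_fun hs (2 : Fin 3))

lemma coeff_zpow_yterm (N j t : ℕ) (hj : 0 < j) (c : ℂ) :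
    coeff (Finsupp.single 2 N) ((C c * X 1 ^ j * X 2 ^ t : MvPolynomial (Fin 3) ℂ)) = 0 := by
  rw [mul_assoc, X_pow_eq_monomial, X_pow_eq_monomial, monomial_mul, C_mul_monomial,
    coeff_monomial, if_neg]
  intro hs
  have := DFunLike.congr_fun hs (1 : Fin 3)
  simp [Finsupp.single_apply] at this
  omega

theorem stmt9 (a b : ℕ) (ha : 2 < a) (hab : a < b) (e : ℕ)
    (he : e = Nat.lcm a b) (m : ℕ) (hm : 0 < m) (hma : m < a) :
    ∀ v : MvPolynomial (Fin 3) ℂ,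
      v = (∑ i ∈ Icc 1 (e / a),
            C ((e / a).choose i : ℂ) * (X 0 + X 2 ^ m) ^ i * X 2 ^ (e - i * a)) -
          (∑ j ∈ Icc 1 (e / b),
            C ((e / b).choose j : ℂ) * X 1 ^ j * X 2 ^ (e - j * b)) →
      v.totalDegree = e - a + m ∧
      v.coeff (Finsupp.single 2 (e - a + m)) = ((e / a : ℕ) : ℂ) := by
  intro v hv
  have ha0 : 0 < a := by omega
  have hb0 : 0 < b := by omega
  have hae : a ∣ e := he ▸ Nat.dvd_lcm_left a b
  have hbe : b ∣ e := he ▸ Nat.dvd_lcm_right a b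
  have he0 : 0 < e := he ▸ Nat.pos_of_ne_zero (Nat.lcm_ne_zero (by omega) (by omega))
  have hale : a ≤ e := Nat.le_of_dvd he0 hae
  have hble : b ≤ e := Nat.le_of_dvd he0 hbe
  have hea1 : 1 ≤ e / a := (Nat.one_le_div_iff ha0).mpr hale
  have heb1 : 1 ≤ e / b := (Nat.one_le_div_iff hb0).mpr hble
  -- coefficient computation
  have hcoeff : v.coeff (Finsupp.single 2 (e - a + m)) = ((e / a : ℕ) : ℂ) := by
    rw [hv, coeff_sub]
    have h2 : coeff (Finsupp.single (2 : Fin 3) (e - a + m))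
        ((∑ j ∈ Icc 1 (e / b), C ((e / b).choose j : ℂ) * X 1 ^ j * X 2 ^ (e - j * b) : MvPolynomial (Fin 3) ℂ)) = 0 := by
      rw [coeff_sum]
      refine Finset.sum_eq_zero fun j hj => ?_
      exact coeff_zpow_yterm _ _ _ (Finset.mem_Icc.mp hj).1 _
    rw [h2, sub_zero, coeff_sum]
    have h1 : ∀ i ∈ Icc 1 (e / a),
        coeff (Finsupp.single (2 : Fin 3) (e - a + m))
          (C ((e / a).choose i : ℂ) * (X 0 + X 2 ^ m) ^ i * X 2 ^ (e - i * a)) =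
        if i = 1 then ((e / a : ℕ) : ℂ) else 0 := by
      intro i hi
      have hi' : 1 ≤ i ∧ i ≤ e / a := Finset.mem_Icc.mp hi
      have hia : i * a ≤ e := (Nat.le_div_iff_mul_le ha0).mp hi'.2
      rw [coeff_zpow_term]
      by_cases h : i = 1
      · subst h
        rw [if_pos (by omega), if_pos rfl]
        simp
      · rw [if_neg, if_neg h]
        have h1 : m * 1 + 1 * (a - m) = a := by omega
        have h2 : m * i + i * (a - m) = i * a := by
          have : m * i + i * (a - m) = i * (m + (a - m)) := by ring
          rw [this]; congr 1; omega
        have h3 : 1 * (a - m) ≤ i * (a - m) := Nat.mul_le_mul_right _ hi'.1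
        have h4 : 1 * (a - m) ≠ i * (a - m) := by
          intro hc
          have := Nat.eq_of_mul_eq_mul_right (by omega : 0 < a - m)
            (by linarith [hc] : 1 * (a - m) = i * (a - m))
          omega
        omega
    rw [Finset.sum_congr rfl h1, Finset.sum_ite_eq' (Icc 1 (e / a)) 1
      (fun _ => ((e / a : ℕ) : ℂ)), if_pos (Finset.mem_Icc.mpr ⟨le_refl 1, hea1⟩)]
  refine ⟨?_, hcoeff⟩
  -- total degree
  have hub : v.totalDegree ≤ e - a + m := by
    rw [hv, sub_eq_add_neg]
    refine (totalDegree_add _ _).trans (max_le ?_ ?_)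
    · refine totalDegree_finsetSum_le fun i hi => ?_
      have hi' : 1 ≤ i ∧ i ≤ e / a := Finset.mem_Icc.mp hi
      have hia : i * a ≤ e := (Nat.le_div_iff_mul_le ha0).mp hi'.2
      refine (totalDegree_mul _ _).trans ?_
      have hA : ((C ((e / a).choose i : ℂ) * (X 0 + X 2 ^ m) ^ i : MvPolynomial (Fin 3) ℂ)).totalDegree ≤ i * m := by
        refine (totalDegree_mul _ _).trans ?_
        rw [totalDegree_C, zero_add]
        refine (totalDegree_pow _ _).trans ?_
        refine Nat.mul_le_mul_left _ ?_
        refine (totalDegree_add _ _).trans (max_le ?_ ?_)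
        · rw [totalDegree_X]; omega
        · rw [totalDegree_X_pow]
      refine (add_le_add hA (le_of_eq (totalDegree_X_pow _ _))).trans ?_
      have h2 : m * i + i * (a - m) = i * a := by
        have : m * i + i * (a - m) = i * (m + (a - m)) := by ring
        rw [this]; congr 1; omega
      have h3 : 1 * (a - m) ≤ i * (a - m) := Nat.mul_le_mul_right _ hi'.1
      have h4 : i * m = m * i := Nat.mul_comm _ _
      have h5 : (e - i * a) + i * a = e := Nat.sub_add_cancel hia
      have h6 : (e - a) + a = e := Nat.sub_add_cancel hale
      have h7 : (a - m) + m = a := Nat.sub_add_cancel (le_of_lt hma)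
      omega
    · rw [totalDegree_neg]
      refine totalDegree_finsetSum_le fun j hj => ?_
      have hj' : 1 ≤ j ∧ j ≤ e / b := Finset.mem_Icc.mp hj
      have hjb : j * b ≤ e := (Nat.le_div_iff_mul_le hb0).mp hj'.2
      refine (totalDegree_mul _ _).trans ?_
      have hA : ((C ((e / b).choose j : ℂ) * X 1 ^ j : MvPolynomial (Fin 3) ℂ)).totalDegree ≤ j := by
        refine (totalDegree_mul _ _).trans ?_
        rw [totalDegree_C, zero_add, totalDegree_X_pow]
      refine (add_le_add hA (le_of_eq (totalDegree_X_pow _ _))).trans ?_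
      have h2 : j * 1 + j * (b - 1) = j * b := by
        have : j * 1 + j * (b - 1) = j * (1 + (b - 1)) := by ring
        rw [this]; congr 1; omega
      have h3 : 1 * (b - 1) ≤ j * (b - 1) := Nat.mul_le_mul_right _ hj'.1
      have h5 : (e - j * b) + j * b = e := Nat.sub_add_cancel hjb
      have h6 : (e - a) + a = e := Nat.sub_add_cancel hale
      have h7 : (b - 1) + 1 = b := Nat.sub_add_cancel (by omega)
      omega
  have hlb : e - a + m ≤ v.totalDegree := by
    have hne : v.coeff (Finsupp.single 2 (e - a + m)) ≠ 0 := by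
      rw [hcoeff]
      exact Nat.cast_ne_zero.mpr (by omega : e / a ≠ 0)
    have hmem : Finsupp.single 2 (e - a + m) ∈ v.support := by
      rwa [MvPolynomial.mem_support_iff]
    have h := le_totalDegree hmem
    rwa [Finsupp.sum_single_index rfl] at h
  omega
end
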